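/- Suppose z = (1/2)(e^{iθ₀}, e^{iθ₁}, e^{iθ₂}, e^{iθ₃}) with P_j = |z_j|² = 1/4 for all j and Q_j = |Σ_k A_{jk}z_k|² = 1/4 for all j, where A = (1/2)[[1,1,1,1],[1,1,−1,−1],[1,−1,1,−1],[1,−1,−1,1]]. Then at least two of the numbers R_j = |Σ_k B_{jk}z_k|² (with B = (1/2)[[1,1,1,−1],[1,1,−1,1],[1,−1,1,1],[1,−1,−1,−1]]) vanish; consequently the Shannon entropy H({R_j}) ≤ 1, with H({R_j}) = 1 iff up to global phase and allowed symmetries z = (1/2)(1, −1, ±i, ±i). -/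

import Mathlib

open Complex ComplexConjugate

noncomputable section

/-- The orthogonal matrix A. -/
def Amat : Matrix (Fin 4) (Fin 4) ℂ :=
  (1/2 : ℂ) • !![1,1,1,1; 1,1,-1,-1; 1,-1,1,-1; 1,-1,-1,1]

/-- The orthogonal matrix B. -/
def Bmat : Matrix (Fin 4) (Fin 4) ℂ :=
  (1/2 : ℂ) • !![1,1,1,-1; 1,1,-1,1; 1,-1,1,1; 1,-1,-1,-1]

/-- Binary entropy bound with equality characterization. -/
theorem entropy_pair (p q : ℝ) (hp : 0 ≤ p) (hq : 0 ≤ q) (hpq : p + q = 1) :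
    -(p * Real.logb 2 p + q * Real.logb 2 q) ≤ 1 ∧
    (-(p * Real.logb 2 p + q * Real.logb 2 q) = 1 ↔ p = 1/2) := by
  have l2 : (0:ℝ) < Real.log 2 := Real.log_pos (by norm_num)
  have key : ∀ x : ℝ, 0 ≤ x → x - 1/2 ≤ x * Real.log (2*x) := by
    intro x hx
    rcases eq_or_lt_of_le hx with h|h
    · rw [← h]; norm_num
    · have h1 : (0:ℝ) < 2*x := by linarith
      have hb := Real.log_le_sub_one_of_pos (show (0:ℝ) < (2*x)⁻¹ by positivity)
      rw [Real.log_inv] at hb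
      have h2 : 1 - (2*x)⁻¹ ≤ Real.log (2*x) := by linarith
      have hxx : x * (1 - (2*x)⁻¹) = x - 1/2 := by field_simp
      nlinarith [mul_le_mul_of_nonneg_left h2 (le_of_lt h)]
  have keys : ∀ x : ℝ, 0 < x → x ≠ 1/2 → x - 1/2 < x * Real.log (2*x) := by
    intro x hx hne
    have h1 : (0:ℝ) < 2*x := by linarith
    have hne' : (2*x)⁻¹ ≠ 1 := by
      intro hh
      apply hne
      have : (2*x) = 1 := by
        field_simp at hh; linarith
      linarith
    have hb := Real.log_lt_sub_one_of_pos (show (0:ℝ) < (2*x)⁻¹ by positivity) hne'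
    rw [Real.log_inv] at hb
    have h2 : 1 - (2*x)⁻¹ < Real.log (2*x) := by linarith
    have hxx : x * (1 - (2*x)⁻¹) = x - 1/2 := by field_simp
    nlinarith [mul_lt_mul_of_pos_left h2 hx]
  have hsplit : ∀ x : ℝ, 0 ≤ x → x * Real.log (2*x) = x * Real.log x + x * Real.log 2 := by
    intro x hx
    rcases eq_or_lt_of_le hx with h|h
    · rw [← h]; ring_nf
    · rw [Real.log_mul (by norm_num) (ne_of_gt h)]; ring
  have hlog2 : p * Real.log 2 + q * Real.log 2 = Real.log 2 := by
    rw [← add_mul, hpq, one_mul]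
  have hrw : -(p * Real.logb 2 p + q * Real.logb 2 q)
      = -(p * Real.log p + q * Real.log q) / Real.log 2 := by
    rw [Real.logb, Real.logb]; ring
  constructor
  · rw [hrw, div_le_one l2]
    have := key p hp; have := key q hq
    have := hsplit p hp; have := hsplit q hq
    linarith
  · constructor
    · intro hH
      by_contra hne
      rcases eq_or_lt_of_le hp with h0|h0
      · rw [hrw] at hH
        rw [← h0] at hH
        have hq1 : q = 1 := by linarith
        rw [hq1] at hH
        simp [Real.log_one] at hH
      · have h1 := keys p h0 hne
        have h2 := key q hq
        have e1 := hsplit p hp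
        have e2 := hsplit q hq
        rw [hrw, div_eq_one_iff_eq (ne_of_gt l2)] at hH
        linarith
    · intro hp2
      have hq2 : q = 1/2 := by linarith
      rw [hp2, hq2, show Real.logb 2 (1/2) = -1 by
        rw [show (1/2:ℝ) = 2⁻¹ by norm_num, Real.logb, Real.log_inv]; field_simp]
      ring

theorem mulconj (w : ℂ) (r : ℝ) (h : ‖w‖ ^ 2 = r) : w * conj w = (r : ℂ) := by
  rw [Complex.mul_conj]; norm_cast; rw [← Complex.sq_norm]; exact h

theorem par' (u v : ℂ) (hu : ‖u‖ = 1/2) (hv : ‖v‖ = 1/2) :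
    ‖u+v‖^2 + ‖u-v‖^2 = 1 := by
  have h1 : Complex.normSq u = 1/4 := by rw [← Complex.sq_norm, hu]; norm_num
  have h2 : Complex.normSq v = 1/4 := by rw [← Complex.sq_norm, hv]; norm_num
  rw [Complex.sq_norm, Complex.sq_norm, Complex.normSq_add, Complex.normSq_sub, h1, h2]
  ring

theorem half_iff (u v : ℂ) (hu : ‖u‖ = 1/2) (hv : ‖v‖ = 1/2) :
    ‖u+v‖^2 = 1/2 ↔ (u * conj v).re = 0 := by
  have h1 : Complex.normSq u = 1/4 := by rw [← Complex.sq_norm, hu]; norm_num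
  have h2 : Complex.normSq v = 1/4 := by rw [← Complex.sq_norm, hv]; norm_num
  rw [Complex.sq_norm, Complex.normSq_add, h1, h2]
  constructor <;> intro h <;> linarith

theorem ortho_pm (u v : ℂ) (hu : ‖u‖ = 1/2) (hv : ‖v‖ = 1/2)
    (h : (u * conj v).re = 0) : v = I * u ∨ v = -(I * u) := by
  have hI2 : Complex.I * Complex.I = -1 := Complex.I_mul_I
  have hns : Complex.normSq (u * conj v) = 1/16 := by
    rw [Complex.normSq_mul, Complex.normSq_conj, ← Complex.sq_norm u, ← Complex.sq_norm v, hu, hv]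
    norm_num
  have him : (u * conj v).im = 1/4 ∨ (u * conj v).im = -(1/4) := by
    have h0 : ((u * conj v).im - 1/4) * ((u * conj v).im + 1/4) = 0 := by
      have := Complex.normSq_apply (u * conj v)
      nlinarith [hns, this, h]
    rcases mul_eq_zero.mp h0 with h'|h'
    · left; linarith
    · right; linarith
  have hvv : v * conj v = (1/4 : ℂ) := by
    rw [Complex.mul_conj]; norm_cast; rw [← Complex.sq_norm, hv]; norm_num
  have hval : u * conj v = (1/4 : ℂ) * I ∨ u * conj v = -((1/4 : ℂ) * I) := by
    rcases him with h'|h'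
    · left; apply Complex.ext <;> simp [h, h']
    · right; apply Complex.ext <;> simp [h, h']
  rcases hval with h'|h'
  · right
    have h2 : u * (1/4 : ℂ) = 1/4 * I * v := by linear_combination v * h' - u * hvv
    linear_combination (4*I) * h2 + v * hI2
  · left
    have h2 : u * (1/4 : ℂ) = -(1/4 * I * v) := by linear_combination v * h' - u * hvv
    linear_combination (-(4:ℂ)*I) * h2 + v * hI2

theorem builder (z : Fin 4 → ℂ) (a b d e : Fin 4) (σ : Equiv.Perm (Fin 4))
    (h0 : σ 0 = d) (h1 : σ 1 = e) (h2 : σ 2 = a) (h3 : σ 3 = b)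
    (τ : ℂ) (hτ : τ = I ∨ τ = -I)
    (heq : z b = z a) (hanti : z e = -(z d)) (hrel : z d = τ * z a)
    (habs : ‖z d‖ = 1/2) :
    ∃ (c : ℂ) (s : ℂ) (σ' : Equiv.Perm (Fin 4)),
      ‖c‖ = 1 ∧ (s = I ∨ s = -I) ∧
      ∀ j, z (σ' j) = c * (1/2 : ℂ) * ![1, -1, s, s] j := by
  have hτ2 : τ * τ = -1 := by rcases hτ with h|h <;> rw [h] <;> simp [Complex.I_mul_I]
  refine ⟨2 * z d, -τ, σ, ?_, ?_, ?_⟩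
  · rw [norm_mul, habs]; norm_num
  · rcases hτ with h|h
    · right; rw [h]
    · left; rw [h]; ring
  · intro j
    fin_cases j
    · show z (σ 0) = 2 * z d * (1/2 : ℂ) * ![1, -1, -τ, -τ] 0
      rw [h0]; simp; ring
    · show z (σ 1) = 2 * z d * (1/2 : ℂ) * ![1, -1, -τ, -τ] 1
      rw [h1, hanti]; simp; ring
    · show z (σ 2) = 2 * z d * (1/2 : ℂ) * ![1, -1, -τ, -τ] 2
      rw [h2]
      simp only [Matrix.cons_val_two, Matrix.tail_cons, Matrix.head_cons]
      linear_combination τ * hrel + z a * hτ2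
    · show z (σ 3) = 2 * z d * (1/2 : ℂ) * ![1, -1, -τ, -τ] 3
      rw [h3, heq]
      simp only [Matrix.cons_val_three, Matrix.tail_cons, Matrix.head_cons]
      linear_combination τ * hrel + z a * hτ2

theorem witness_orth (z : Fin 4 → ℂ) (c s : ℂ) (σ : Equiv.Perm (Fin 4))
    (hc : ‖c‖ = 1) (hs : s = I ∨ s = -I)
    (hw : ∀ j, z (σ j) = c * (1/2 : ℂ) * ![1, -1, s, s] j)
    (a b d : Fin 4) (hab : a ≠ b) (had : a ≠ d) (hbd : b ≠ d)
    (hzz : z a = z b) : (z a * conj (z d)).re = 0 := by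
  have hc0 : c ≠ 0 := by intro h; rw [h] at hc; simp at hc
  have hcc : c * conj c = 1 := by
    have := mulconj c 1 (by rw [hc]; norm_num); simpa using this
  have hvals : ∀ j, z j = c * (1/2 : ℂ) * ![1, -1, s, s] (σ.symm j) := fun j => by
    have h := hw (σ.symm j); rwa [Equiv.apply_symm_apply] at h
  have hs1 : s ≠ 1 := by rcases hs with h|h <;> subst h <;> simp [Complex.ext_iff]
  have hs2 : s ≠ -1 := by rcases hs with h|h <;> subst h <;> simp [Complex.ext_iff]
  have half0 : c * (1/2 : ℂ) ≠ 0 := by simp [hc0]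
  have quad : ∀ m : Fin 4, m = 0 ∨ m = 1 ∨ m = 2 ∨ m = 3 := by decide
  have key : ∀ m n : Fin 4, m ≠ n → (![1, -1, s, s] m = ![1, -1, s, s] n) →
      m ≠ 0 ∧ m ≠ 1 := by
    intro m n hmn hv
    fin_cases m <;> fin_cases n <;>
      first
        | exact absurd rfl hmn
        | exact ⟨by decide, by decide⟩
        | (simp only [Matrix.cons_val_zero, Matrix.cons_val_one, Matrix.head_cons,
            Matrix.cons_val_two, Matrix.tail_cons, Matrix.cons_val_three,
            Matrix.cons_val_fin_one] at hv;
           first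
            | exact absurd hv hs1 | exact absurd hv hs2
            | exact absurd hv.symm hs1 | exact absurd hv.symm hs2
            | exact absurd hv (by norm_num))
  have hvab : ![1, -1, s, s] (σ.symm a) = ![1, -1, s, s] (σ.symm b) := by
    have h := hzz; rw [hvals a, hvals b] at h; exact mul_left_cancel₀ half0 h
  have hne : σ.symm a ≠ σ.symm b := fun h => hab (σ.symm.injective h)
  obtain ⟨ha0, ha1⟩ := key _ _ hne hvab
  obtain ⟨hb0, hb1⟩ := key _ _ hne.symm hvab.symm
  have hza : z a = c * (1/2 : ℂ) * s := by
    rw [hvals a]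
    rcases quad (σ.symm a) with h|h|h|h
    · exact absurd h ha0
    · exact absurd h ha1
    · rw [h]; simp
    · rw [h]; simp
  have hnda : σ.symm d ≠ σ.symm a := fun h => had (σ.symm.injective h).symm
  have hndb : σ.symm d ≠ σ.symm b := fun h => hbd (σ.symm.injective h).symm
  have hd01 : σ.symm d = 0 ∨ σ.symm d = 1 := by
    rcases quad (σ.symm d) with g|g|g|g
    · exact Or.inl g
    · exact Or.inr g
    · exfalso
      rcases quad (σ.symm a) with h|h|h|h
      · exact ha0 h
      · exact ha1 h
      · exact hnda (g.trans h.symm)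
      · rcases quad (σ.symm b) with h'|h'|h'|h'
        · exact hb0 h'
        · exact hb1 h'
        · exact hndb (g.trans h'.symm)
        · exact hne (h.trans h'.symm)
    · exfalso
      rcases quad (σ.symm a) with h|h|h|h
      · exact ha0 h
      · exact ha1 h
      · rcases quad (σ.symm b) with h'|h'|h'|h'
        · exact hb0 h'
        · exact hb1 h'
        · exact hne (h.trans h'.symm)
        · exact hndb (g.trans h'.symm)
      · exact hnda (g.trans h.symm)
  have hzd : z d = c * (1/2 : ℂ) ∨ z d = -(c * (1/2 : ℂ)) := by
    rcases hd01 with g|g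
    · left; rw [hvals d, g]; simp
    · right; rw [hvals d, g]; simp
  have hfin : z a * conj (z d) = s * (1/4 : ℂ) ∨ z a * conj (z d) = -(s * (1/4 : ℂ)) := by
    rcases hzd with g|g
    · left
      rw [hza, g]
      simp only [map_mul, map_div₀, map_one, map_ofNat, map_neg]
      linear_combination (s/4) * hcc
    · right
      rw [hza, g]
      simp only [map_mul, map_div₀, map_one, map_ofNat, map_neg]
      linear_combination (-(s/4)) * hcc
  rcases hfin with g|g <;> rw [g] <;> rcases hs with h|h <;> rw [h] <;>
    simp [Complex.mul_re]

theorem case_close (z : Fin 4 → ℂ) (R : Fin 4 → ℝ) (u v : ℂ)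
    (hu : ‖u‖ = 1/2) (hv : ‖v‖ = 1/2)
    (i3 i4 : Fin 4) (hne : i3 ≠ i4) (hR3 : R i3 = 0) (hR4 : R i4 = 0)
    (hsum : ∑ j, R j * Real.logb 2 (R j)
      = (‖u+v‖^2) * Real.logb 2 (‖u+v‖^2)
        + (‖u-v‖^2) * Real.logb 2 (‖u-v‖^2))
    (hfwd : ∀ τ : ℂ, (τ = I ∨ τ = -I) → v = τ * u →
      ∃ (c : ℂ) (s : ℂ) (σ : Equiv.Perm (Fin 4)),
        ‖c‖ = 1 ∧ (s = I ∨ s = -I) ∧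
        ∀ j, z (σ j) = c * (1/2 : ℂ) * ![1, -1, s, s] j)
    (hbwd : (∃ (c : ℂ) (s : ℂ) (σ : Equiv.Perm (Fin 4)),
        ‖c‖ = 1 ∧ (s = I ∨ s = -I) ∧
        ∀ j, z (σ j) = c * (1/2 : ℂ) * ![1, -1, s, s] j) → (u * conj v).re = 0) :
    (∃ j k : Fin 4, j ≠ k ∧ R j = 0 ∧ R k = 0) ∧
    (-∑ j, R j * Real.logb 2 (R j)) ≤ 1 ∧
    ((-∑ j, R j * Real.logb 2 (R j)) = 1 ↔ ∃ (c : ℂ) (s : ℂ) (σ : Equiv.Perm (Fin 4)),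
      ‖c‖ = 1 ∧ (s = I ∨ s = -I) ∧
      ∀ j, z (σ j) = c * (1/2 : ℂ) * ![1, -1, s, s] j) := by
  have hp : (0:ℝ) ≤ ‖u+v‖^2 := sq_nonneg _
  have hq : (0:ℝ) ≤ ‖u-v‖^2 := sq_nonneg _
  have hpq := par' u v hu hv
  obtain ⟨hle, heq⟩ := entropy_pair _ _ hp hq hpq
  refine ⟨⟨i3, i4, hne, hR3, hR4⟩, ?_, ?_⟩
  · rw [hsum]; exact hle
  · rw [hsum, heq]
    constructor
    · intro h
      rcases ortho_pm u v hu hv ((half_iff u v hu hv).mp h) with h'|h'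
      · exact hfwd I (Or.inl rfl) h'
      · exact hfwd (-I) (Or.inr rfl) (by rw [h']; ring)
    · intro h
      exact (half_iff u v hu hv).mpr (hbwd h)

/-- If all |zⱼ| = 1/2 (so Pⱼ = 1/4) and all Qⱼ = 1/4, then at least two of the
    Rⱼ vanish, the Shannon entropy H({Rⱼ}) ≤ 1, and H({Rⱼ}) = 1 iff up to global
    phase and permutation z = (1/2)(1, −1, ±i, ±i). This characterizes the cluster
    state |C₂⟩. -/
theorem cluster_state_characterization (z : Fin 4 → ℂ)
    (hP : ∀ j, ‖z j‖ = 1/2)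
    (hQ : ∀ j, (‖∑ k, Amat j k * z k‖)^2 = 1/4) :
    let R : Fin 4 → ℝ := fun j => (‖∑ k, Bmat j k * z k‖)^2
    let H : ℝ := -∑ j, R j * Real.logb 2 (R j)
    (∃ j k : Fin 4, j ≠ k ∧ R j = 0 ∧ R k = 0) ∧
    H ≤ 1 ∧
    (H = 1 ↔ ∃ (c : ℂ) (s : ℂ) (σ : Equiv.Perm (Fin 4)),
      ‖c‖ = 1 ∧ (s = I ∨ s = -I) ∧
      ∀ j, z (σ j) = c * (1/2 : ℂ) * ![1, -1, s, s] j) := by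
  intro R H
  have hz : ∀ j, z j ≠ 0 := by
    intro j h
    have := hP j
    rw [h] at this
    simp at this
  have hm : ∀ j, z j * conj (z j) = (1/4 : ℂ) := fun j => by
    have h := mulconj (z j) (1/4) (by rw [hP j]; norm_num)
    push_cast at h
    exact h
  -- row sums of A
  have a0 : (∑ k, Amat 0 k * z k) = (z 0 + z 1 + z 2 + z 3) * (1/2 : ℂ) := by
    simp [Amat, Fin.sum_univ_four]; ring
  have a1 : (∑ k, Amat 1 k * z k) = (z 0 + z 1 - z 2 - z 3) * (1/2 : ℂ) := by
    simp [Amat, Fin.sum_univ_four]; ring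
  have a2 : (∑ k, Amat 2 k * z k) = (z 0 - z 1 + z 2 - z 3) * (1/2 : ℂ) := by
    simp [Amat, Fin.sum_univ_four]; ring
  have a3 : (∑ k, Amat 3 k * z k) = (z 0 - z 1 - z 2 + z 3) * (1/2 : ℂ) := by
    simp [Amat, Fin.sum_univ_four]; ring
  have q0 : (z 0 + z 1 + z 2 + z 3) * (conj (z 0) + conj (z 1) + conj (z 2) + conj (z 3)) = 1 := by
    have h := mulconj _ _ (hQ 0)
    rw [a0] at h
    simp only [map_mul, map_add, map_sub, map_div₀, map_one, map_ofNat] at h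
    push_cast at h
    linear_combination 4 * h
  have q1 : (z 0 + z 1 - z 2 - z 3) * (conj (z 0) + conj (z 1) - conj (z 2) - conj (z 3)) = 1 := by
    have h := mulconj _ _ (hQ 1)
    rw [a1] at h
    simp only [map_mul, map_add, map_sub, map_div₀, map_one, map_ofNat] at h
    push_cast at h
    linear_combination 4 * h
  have q2 : (z 0 - z 1 + z 2 - z 3) * (conj (z 0) - conj (z 1) + conj (z 2) - conj (z 3)) = 1 := by
    have h := mulconj _ _ (hQ 2)
    rw [a2] at h
    simp only [map_mul, map_add, map_sub, map_div₀, map_one, map_ofNat] at h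
    push_cast at h
    linear_combination 4 * h
  have q3 : (z 0 - z 1 - z 2 + z 3) * (conj (z 0) - conj (z 1) - conj (z 2) + conj (z 3)) = 1 := by
    have h := mulconj _ _ (hQ 3)
    rw [a3] at h
    simp only [map_mul, map_add, map_sub, map_div₀, map_one, map_ofNat] at h
    push_cast at h
    linear_combination 4 * h
  have h12 : z 0 * conj (z 1) + z 1 * conj (z 0) + z 2 * conj (z 3) + z 3 * conj (z 2) = 0 := by
    linear_combination (1/2) * q0 + (1/2) * q1 - hm 0 - hm 1 - hm 2 - hm 3
  have h13 : z 0 * conj (z 2) + z 2 * conj (z 0) + z 1 * conj (z 3) + z 3 * conj (z 1) = 0 := by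
    linear_combination (1/2) * q0 + (1/2) * q2 - hm 0 - hm 1 - hm 2 - hm 3
  have h14 : z 0 * conj (z 3) + z 3 * conj (z 0) + z 1 * conj (z 2) + z 2 * conj (z 1) = 0 := by
    linear_combination (1/2) * q0 + (1/2) * q3 - hm 0 - hm 1 - hm 2 - hm 3
  have P1 : (z 0 * z 2 + z 1 * z 3) * (z 0 * z 3 + z 1 * z 2) = 0 := by
    linear_combination 4*z 0*z 1*z 2*z 3 * h12 - 4*z 0^2*z 2*z 3 * hm 1 - 4*z 1^2*z 2*z 3 * hm 0
      - 4*z 0*z 1*z 2^2 * hm 3 - 4*z 0*z 1*z 3^2 * hm 2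
  have P2 : (z 0 * z 1 + z 2 * z 3) * (z 0 * z 3 + z 1 * z 2) = 0 := by
    linear_combination 4*z 0*z 1*z 2*z 3 * h13 - 4*z 0^2*z 1*z 3 * hm 2 - 4*z 2^2*z 1*z 3 * hm 0
      - 4*z 1^2*z 0*z 2 * hm 3 - 4*z 3^2*z 0*z 2 * hm 1
  have P3 : (z 0 * z 1 + z 2 * z 3) * (z 0 * z 2 + z 1 * z 3) = 0 := by
    linear_combination 4*z 0*z 1*z 2*z 3 * h14 - 4*z 0^2*z 1*z 2 * hm 3 - 4*z 3^2*z 1*z 2 * hm 0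
      - 4*z 1^2*z 0*z 3 * hm 2 - 4*z 2^2*z 0*z 3 * hm 1
  -- row sums of B
  have b0 : (∑ k, Bmat 0 k * z k) = (z 0 + z 1 + z 2 - z 3) * (1/2 : ℂ) := by
    simp [Bmat, Fin.sum_univ_four]; ring
  have b1 : (∑ k, Bmat 1 k * z k) = (z 0 + z 1 - z 2 + z 3) * (1/2 : ℂ) := by
    simp [Bmat, Fin.sum_univ_four]; ring
  have b2 : (∑ k, Bmat 2 k * z k) = (z 0 - z 1 + z 2 + z 3) * (1/2 : ℂ) := by
    simp [Bmat, Fin.sum_univ_four]; ring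
  have b3 : (∑ k, Bmat 3 k * z k) = (z 0 - z 1 - z 2 - z 3) * (1/2 : ℂ) := by
    simp [Bmat, Fin.sum_univ_four]; ring
  have hRdef : ∀ j, R j = (‖∑ k, Bmat j k * z k‖)^2 := fun j => rfl
  -- two of X, Y, Z vanish
  have hcases : (z 0 * z 1 + z 2 * z 3 = 0 ∧ z 0 * z 2 + z 1 * z 3 = 0) ∨
      (z 0 * z 1 + z 2 * z 3 = 0 ∧ z 0 * z 3 + z 1 * z 2 = 0) ∨
      (z 0 * z 2 + z 1 * z 3 = 0 ∧ z 0 * z 3 + z 1 * z 2 = 0) := by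
    rcases mul_eq_zero.mp P3 with hX | hY
    · rcases mul_eq_zero.mp P1 with hY | hZ
      · exact Or.inl ⟨hX, hY⟩
      · exact Or.inr (Or.inl ⟨hX, hZ⟩)
    · rcases mul_eq_zero.mp P2 with hX | hZ
      · exact Or.inl ⟨hX, hY⟩
      · exact Or.inr (Or.inr ⟨hY, hZ⟩)
  rcases hcases with ⟨hX, hY⟩ | ⟨hX, hZ⟩ | ⟨hY, hZ⟩
  · -- X = Y = 0 : cases E / F
    have hd : (z 0 - z 3) * (z 1 - z 2) = 0 := by linear_combination hX - hY
    have hsm : (z 0 + z 3) * (z 1 + z 2) = 0 := by linear_combination hX + hY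
    rcases mul_eq_zero.mp hd with h|h <;> rcases mul_eq_zero.mp hsm with h'|h'
    · exact absurd (by linear_combination (1/2)*h + (1/2)*h' : z 0 = 0) (hz 0)
    · -- case E : z 3 = z 0, z 2 = -z 1
      have he3 : z 3 = z 0 := by linear_combination -h
      have he2 : z 2 = -(z 1) := by linear_combination h'
      have e1 : (∑ k, Bmat 1 k * z k) = z 0 + z 1 := by rw [b1, he2, he3]; ring
      have e2 : (∑ k, Bmat 2 k * z k) = z 0 - z 1 := by rw [b2, he2, he3]; ring
      have e0 : (∑ k, Bmat 0 k * z k) = 0 := by rw [b0, he2, he3]; ring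
      have e3 : (∑ k, Bmat 3 k * z k) = 0 := by rw [b3, he2, he3]; ring
      have r1 : R 1 = ‖z 0 + z 1‖^2 := by rw [hRdef 1, e1]
      have r2 : R 2 = ‖z 0 - z 1‖^2 := by rw [hRdef 2, e2]
      have r0 : R 0 = 0 := by rw [hRdef 0, e0]; simp
      have r3 : R 3 = 0 := by rw [hRdef 3, e3]; simp
      refine case_close z R (z 0) (z 1) (hP 0) (hP 1) 0 3 (by decide) r0 r3 ?_ ?_ ?_
      · rw [Fin.sum_univ_four, r0, r1, r2, r3]; ring
      · intro τ hτ hrel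
        exact builder z 0 3 1 2 ⟨![1,2,0,3], ![2,0,1,3], by decide, by decide⟩
          (by decide) (by decide) (by decide) (by decide) τ hτ he3 he2 hrel (hP 1)
      · rintro ⟨c, s, σ, hc, hs, hw⟩
        have := witness_orth z c s σ hc hs hw 3 0 1 (by decide) (by decide) (by decide) he3
        rwa [he3] at this
    · -- case F : z 2 = z 1, z 3 = -z 0
      have hf2 : z 2 = z 1 := by linear_combination -h
      have hf3 : z 3 = -(z 0) := by linear_combination h'
      have e0 : (∑ k, Bmat 0 k * z k) = z 0 + z 1 := by rw [b0, hf2, hf3]; ring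
      have e3 : (∑ k, Bmat 3 k * z k) = z 0 - z 1 := by rw [b3, hf2, hf3]; ring
      have e1 : (∑ k, Bmat 1 k * z k) = 0 := by rw [b1, hf2, hf3]; ring
      have e2 : (∑ k, Bmat 2 k * z k) = 0 := by rw [b2, hf2, hf3]; ring
      have r0 : R 0 = ‖z 0 + z 1‖^2 := by rw [hRdef 0, e0]
      have r3 : R 3 = ‖z 0 - z 1‖^2 := by rw [hRdef 3, e3]
      have r1 : R 1 = 0 := by rw [hRdef 1, e1]; simp
      have r2 : R 2 = 0 := by rw [hRdef 2, e2]; simp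
      refine case_close z R (z 0) (z 1) (hP 0) (hP 1) 1 2 (by decide) r1 r2 ?_ ?_ ?_
      · rw [Fin.sum_univ_four, r0, r1, r2, r3]; ring
      · intro τ hτ hrel
        have hτ2 : τ * τ = -1 := by rcases hτ with hh|hh <;> rw [hh] <;> simp [Complex.I_mul_I]
        have hrel' : z 0 = (-τ) * z 1 := by
          rw [hrel]; linear_combination (z 0) * hτ2
        have hτ' : -τ = I ∨ -τ = -I := by
          rcases hτ with hh|hh
          · right; rw [hh]
          · left; rw [hh]; ring
        exact builder z 1 2 0 3 ⟨![0,3,1,2], ![0,2,3,1], by decide, by decide⟩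
          (by decide) (by decide) (by decide) (by decide) (-τ) hτ' hf2 hf3 hrel' (hP 0)
      · rintro ⟨c, s, σ, hc, hs, hw⟩
        have := witness_orth z c s σ hc hs hw 2 1 0 (by decide) (by decide) (by decide) hf2
        rw [hf2] at this
        have hconj : z 0 * conj (z 1) = conj (z 1 * conj (z 0)) := by
          rw [map_mul, Complex.conj_conj, mul_comm]
        rw [hconj, Complex.conj_re]
        exact this
    · exact absurd (by linear_combination (1/2)*h + (1/2)*h' : z 1 = 0) (hz 1)
  · -- X = Z = 0 : cases C / D
    have hd : (z 0 - z 2) * (z 1 - z 3) = 0 := by linear_combination hX - hZ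
    have hsm : (z 0 + z 2) * (z 1 + z 3) = 0 := by linear_combination hX + hZ
    rcases mul_eq_zero.mp hd with h|h <;> rcases mul_eq_zero.mp hsm with h'|h'
    · exact absurd (by linear_combination (1/2)*h + (1/2)*h' : z 0 = 0) (hz 0)
    · -- case C : z 2 = z 0, z 3 = -z 1
      have hc2 : z 2 = z 0 := by linear_combination -h
      have hc3 : z 3 = -(z 1) := by linear_combination h'
      have e0 : (∑ k, Bmat 0 k * z k) = z 0 + z 1 := by rw [b0, hc2, hc3]; ring
      have e2 : (∑ k, Bmat 2 k * z k) = z 0 - z 1 := by rw [b2, hc2, hc3]; ring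
      have e1 : (∑ k, Bmat 1 k * z k) = 0 := by rw [b1, hc2, hc3]; ring
      have e3 : (∑ k, Bmat 3 k * z k) = 0 := by rw [b3, hc2, hc3]; ring
      have r0 : R 0 = ‖z 0 + z 1‖^2 := by rw [hRdef 0, e0]
      have r2 : R 2 = ‖z 0 - z 1‖^2 := by rw [hRdef 2, e2]
      have r1 : R 1 = 0 := by rw [hRdef 1, e1]; simp
      have r3 : R 3 = 0 := by rw [hRdef 3, e3]; simp
      refine case_close z R (z 0) (z 1) (hP 0) (hP 1) 1 3 (by decide) r1 r3 ?_ ?_ ?_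
      · rw [Fin.sum_univ_four, r0, r1, r2, r3]; ring
      · intro τ hτ hrel
        exact builder z 0 2 1 3 ⟨![1,3,0,2], ![2,0,3,1], by decide, by decide⟩
          (by decide) (by decide) (by decide) (by decide) τ hτ hc2 hc3 hrel (hP 1)
      · rintro ⟨c, s, σ, hc, hs, hw⟩
        have := witness_orth z c s σ hc hs hw 2 0 1 (by decide) (by decide) (by decide) hc2
        rwa [hc2] at this
    · -- case D : z 3 = z 1, z 2 = -z 0
      have hd3 : z 3 = z 1 := by linear_combination -h
      have hd2 : z 2 = -(z 0) := by linear_combination h'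
      have e1 : (∑ k, Bmat 1 k * z k) = z 0 + z 1 := by rw [b1, hd2, hd3]; ring
      have e3 : (∑ k, Bmat 3 k * z k) = z 0 - z 1 := by rw [b3, hd2, hd3]; ring
      have e0 : (∑ k, Bmat 0 k * z k) = 0 := by rw [b0, hd2, hd3]; ring
      have e2 : (∑ k, Bmat 2 k * z k) = 0 := by rw [b2, hd2, hd3]; ring
      have r1 : R 1 = ‖z 0 + z 1‖^2 := by rw [hRdef 1, e1]
      have r3 : R 3 = ‖z 0 - z 1‖^2 := by rw [hRdef 3, e3]
      have r0 : R 0 = 0 := by rw [hRdef 0, e0]; simp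
      have r2 : R 2 = 0 := by rw [hRdef 2, e2]; simp
      refine case_close z R (z 0) (z 1) (hP 0) (hP 1) 0 2 (by decide) r0 r2 ?_ ?_ ?_
      · rw [Fin.sum_univ_four, r0, r1, r2, r3]; ring
      · intro τ hτ hrel
        have hτ2 : τ * τ = -1 := by rcases hτ with hh|hh <;> rw [hh] <;> simp [Complex.I_mul_I]
        have hrel' : z 0 = (-τ) * z 1 := by
          rw [hrel]; linear_combination (z 0) * hτ2
        have hτ' : -τ = I ∨ -τ = -I := by
          rcases hτ with hh|hh
          · right; rw [hh]
          · left; rw [hh]; ring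
        exact builder z 1 3 0 2 ⟨![0,2,1,3], ![0,2,1,3], by decide, by decide⟩
          (by decide) (by decide) (by decide) (by decide) (-τ) hτ' hd3 hd2 hrel' (hP 0)
      · rintro ⟨c, s, σ, hc, hs, hw⟩
        have := witness_orth z c s σ hc hs hw 3 1 0 (by decide) (by decide) (by decide) hd3
        rw [hd3] at this
        have hconj : z 0 * conj (z 1) = conj (z 1 * conj (z 0)) := by
          rw [map_mul, Complex.conj_conj, mul_comm]
        rw [hconj, Complex.conj_re]
        exact this
    · exact absurd (by linear_combination (1/2)*h + (1/2)*h' : z 1 = 0) (hz 1)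
  · -- Y = Z = 0 : cases A / B
    have hd : (z 0 - z 1) * (z 2 - z 3) = 0 := by linear_combination hY - hZ
    have hsm : (z 0 + z 1) * (z 2 + z 3) = 0 := by linear_combination hY + hZ
    rcases mul_eq_zero.mp hd with h|h <;> rcases mul_eq_zero.mp hsm with h'|h'
    · exact absurd (by linear_combination (1/2)*h + (1/2)*h' : z 0 = 0) (hz 0)
    · -- case A : z 1 = z 0, z 3 = -z 2
      have ha1 : z 1 = z 0 := by linear_combination -h
      have ha3 : z 3 = -(z 2) := by linear_combination h'
      have e0 : (∑ k, Bmat 0 k * z k) = z 0 + z 2 := by rw [b0, ha1, ha3]; ring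
      have e1 : (∑ k, Bmat 1 k * z k) = z 0 - z 2 := by rw [b1, ha1, ha3]; ring
      have e2 : (∑ k, Bmat 2 k * z k) = 0 := by rw [b2, ha1, ha3]; ring
      have e3 : (∑ k, Bmat 3 k * z k) = 0 := by rw [b3, ha1, ha3]; ring
      have r0 : R 0 = ‖z 0 + z 2‖^2 := by rw [hRdef 0, e0]
      have r1 : R 1 = ‖z 0 - z 2‖^2 := by rw [hRdef 1, e1]
      have r2 : R 2 = 0 := by rw [hRdef 2, e2]; simp
      have r3 : R 3 = 0 := by rw [hRdef 3, e3]; simp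
      refine case_close z R (z 0) (z 2) (hP 0) (hP 2) 2 3 (by decide) r2 r3 ?_ ?_ ?_
      · rw [Fin.sum_univ_four, r0, r1, r2, r3]; ring
      · intro τ hτ hrel
        exact builder z 0 1 2 3 ⟨![2,3,0,1], ![2,3,0,1], by decide, by decide⟩
          (by decide) (by decide) (by decide) (by decide) τ hτ ha1 ha3 hrel (hP 2)
      · rintro ⟨c, s, σ, hc, hs, hw⟩
        have := witness_orth z c s σ hc hs hw 1 0 2 (by decide) (by decide) (by decide) ha1
        rwa [ha1] at this
    · -- case B : z 3 = z 2, z 1 = -z 0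
      have hb3 : z 3 = z 2 := by linear_combination -h
      have hb1 : z 1 = -(z 0) := by linear_combination h'
      have e2 : (∑ k, Bmat 2 k * z k) = z 0 + z 2 := by rw [b2, hb1, hb3]; ring
      have e3 : (∑ k, Bmat 3 k * z k) = z 0 - z 2 := by rw [b3, hb1, hb3]; ring
      have e0 : (∑ k, Bmat 0 k * z k) = 0 := by rw [b0, hb1, hb3]; ring
      have e1 : (∑ k, Bmat 1 k * z k) = 0 := by rw [b1, hb1, hb3]; ring
      have r2 : R 2 = ‖z 0 + z 2‖^2 := by rw [hRdef 2, e2]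
      have r3 : R 3 = ‖z 0 - z 2‖^2 := by rw [hRdef 3, e3]
      have r0 : R 0 = 0 := by rw [hRdef 0, e0]; simp
      have r1 : R 1 = 0 := by rw [hRdef 1, e1]; simp
      refine case_close z R (z 0) (z 2) (hP 0) (hP 2) 0 1 (by decide) r0 r1 ?_ ?_ ?_
      · rw [Fin.sum_univ_four, r0, r1, r2, r3]; ring
      · intro τ hτ hrel
        have hτ2 : τ * τ = -1 := by rcases hτ with hh|hh <;> rw [hh] <;> simp [Complex.I_mul_I]
        have hrel' : z 0 = (-τ) * z 2 := by
          rw [hrel]; linear_combination (z 0) * hτ2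
        have hτ' : -τ = I ∨ -τ = -I := by
          rcases hτ with hh|hh
          · right; rw [hh]
          · left; rw [hh]; ring
        exact builder z 2 3 0 1 (Equiv.refl _)
          rfl rfl rfl rfl (-τ) hτ' hb3 hb1 hrel' (hP 0)
      · rintro ⟨c, s, σ, hc, hs, hw⟩
        have := witness_orth z c s σ hc hs hw 3 2 0 (by decide) (by decide) (by decide) hb3
        rw [hb3] at this
        have hconj : z 0 * conj (z 2) = conj (z 2 * conj (z 0)) := by
          rw [map_mul, Complex.conj_conj, mul_comm]
        rw [hconj, Complex.conj_re]
        exact this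
    · exact absurd (by linear_combination (1/2)*h + (1/2)*h' : z 2 = 0) (hz 2)
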